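/- Let σ = (x,y) be a proper (Z_4 × Z_2)-coloring of a snark G, let F = G − Y_0 be the 2-factor determined by Y_0 = {e : y(e) = 0}, let M = X_0 = {e : x(e) = 0}, and let 𝒫 be the F-matching of H = G − M whose edge set is X_2 = {e : x(e) = 2}. Then the F-complement of 𝒫 is 3-even, i.e. every loop of the F-complement contains an even number of 3-vertices of H. -/

import Mathlib

open SimpleGraph

variable {V : Type*}

/-- A cubic graph: every vertex has exactly `3` neighbours. -/
def IsCubic (G : SimpleGraph V) : Prop :=
  ∀ v : V, (G.neighborSet v).ncard = 3

/-- Two edges (as elements of `Sym2 V`) are adjacent if they are distinct and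
share an endpoint. -/
def EdgesAdj (e₁ e₂ : Sym2 V) : Prop :=
  e₁ ≠ e₂ ∧ ∃ v : V, v ∈ e₁ ∧ v ∈ e₂

/-- `G` has a proper `3`-edge-coloring. -/
def HasProper3EdgeColoring (G : SimpleGraph V) : Prop :=
  ∃ c : Sym2 V → Fin 3,
    ∀ e₁ ∈ G.edgeSet, ∀ e₂ ∈ G.edgeSet, EdgesAdj e₁ e₂ → c e₁ ≠ c e₂

/-- A bridgeless graph: no edge is a bridge. -/
def IsBridgeless (G : SimpleGraph V) : Prop :=
  ∀ e ∈ G.edgeSet, ¬ G.IsBridge e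

/-- A snark: a connected bridgeless cubic graph admitting no proper
`3`-edge-coloring. -/
def IsSnark (G : SimpleGraph V) : Prop :=
  G.Connected ∧ IsBridgeless G ∧ IsCubic G ∧ ¬ HasProper3EdgeColoring G

/-- A proper abelian coloring of `G` by the abelian group `A`: every edge gets a
nonzero color, adjacent edges get distinct colors, and at every vertex the
colors of the incident edges sum to zero. -/
def IsProperAbelianColoring {A : Type*} [AddCommGroup A]
    (G : SimpleGraph V) (σ : Sym2 V → A) : Prop :=
  (∀ e ∈ G.edgeSet, σ e ≠ 0) ∧
  (∀ e₁ ∈ G.edgeSet, ∀ e₂ ∈ G.edgeSet, EdgesAdj e₁ e₂ → σ e₁ ≠ σ e₂) ∧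
  (∀ v : V, ∑ᶠ e ∈ G.incidenceSet v, σ e = 0)

/-- `F` is a `2`-factor of `G`: a spanning `2`-regular subgraph. -/
def IsTwoFactor (G F : SimpleGraph V) : Prop :=
  F ≤ G ∧ ∀ v : V, (F.neighborSet v).ncard = 2

/-- `M` is a matching contained in the edge set of `F`. -/
def IsMatchingIn (M : Set (Sym2 V)) (F : SimpleGraph V) : Prop :=
  M ⊆ F.edgeSet ∧ ∀ e₁ ∈ M, ∀ e₂ ∈ M, e₁ ≠ e₂ → ¬ ∃ v : V, v ∈ e₁ ∧ v ∈ e₂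

/-- A perfect matching in `F`: a matching covering every vertex. -/
def IsPerfectMatchingIn (M : Set (Sym2 V)) (F : SimpleGraph V) : Prop :=
  IsMatchingIn M F ∧ ∀ v : V, ∃ e ∈ M, v ∈ e

/-- A maximum matching in `F`: a matching of maximum cardinality. -/
def IsMaximumMatchingIn (M : Set (Sym2 V)) (F : SimpleGraph V) : Prop :=
  IsMatchingIn M F ∧ ∀ M' : Set (Sym2 V), IsMatchingIn M' F → M'.ncard ≤ M.ncard

/-- A `3`-vertex of `H`: a vertex of degree `3`. -/
def IsThreeVertex (H : SimpleGraph V) (v : V) : Prop := (H.neighborSet v).ncard = 3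

/-- A `2`-vertex of `H`: a vertex of degree `2`. -/
def IsTwoVertex (H : SimpleGraph V) (v : V) : Prop := (H.neighborSet v).ncard = 2

/-- An `F`-path in `H`: a (nontrivial) path in `H` whose two end-vertices are
`3`-vertices of `H`, whose interior vertices are all `2`-vertices of `H`, and
whose two end-edges belong to `F`. -/
structure FPathIn (H F : SimpleGraph V) where
  a : V
  b : V
  walk : H.Walk a b
  isPath : walk.IsPath
  len_pos : 0 < walk.length
  ends_three : IsThreeVertex H a ∧ IsThreeVertex H b
  interior_two : ∀ w ∈ walk.support, w ≠ a → w ≠ b → IsTwoVertex H w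
  end_edges : ∀ e ∈ walk.edges, (a ∈ e ∨ b ∈ e) → e ∈ F.edgeSet

/-- The vertices of an `F`-path. -/
def FPathIn.supp {H F : SimpleGraph V} (P : FPathIn H F) : Set V :=
  {v | v ∈ P.walk.support}

/-- The edges of an `F`-path. -/
def FPathIn.edgeSet {H F : SimpleGraph V} (P : FPathIn H F) : Set (Sym2 V) :=
  {e | e ∈ P.walk.edges}

/-- An `F`-matching of `H`: a collection of pairwise vertex-disjoint `F`-paths
such that every `3`-vertex of `H` lies on (exactly) one of them. -/
def IsFMatching (H F : SimpleGraph V) (Ps : Set (FPathIn H F)) : Prop :=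
  (∀ P ∈ Ps, ∀ Q ∈ Ps, P ≠ Q → Disjoint P.supp Q.supp) ∧
  (∀ v : V, IsThreeVertex H v → ∃ P ∈ Ps, v ∈ P.supp)

/-- The set of edges lying on the paths of an `F`-matching. -/
def FMatchingEdges {H F : SimpleGraph V} (Ps : Set (FPathIn H F)) : Set (Sym2 V) :=
  {e | ∃ P ∈ Ps, e ∈ P.walk.edges}

/-- The `F`-complement of an `F`-matching: the subgraph of `H` induced by the
edges of `H` not lying on the paths of `Ps`. -/
def FComplement {H F : SimpleGraph V} (Ps : Set (FPathIn H F)) : SimpleGraph V :=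
  H.deleteEdges (FMatchingEdges Ps)

/-- The number of `3`-vertices of `H` lying on a connected component `c` of `K`. -/
noncomputable def threeCount (H : SimpleGraph V) {K : SimpleGraph V} (c : K.ConnectedComponent) : ℕ :=
  {v ∈ c.supp | IsThreeVertex H v}.ncard

/-- The graph `K` (an `F`-complement, whose nontrivial components are the
loops) is `3`-even w.r.t. `H`: every component carries an even number of
`3`-vertices of `H`. -/
def IsThreeEvenComplement (H K : SimpleGraph V) : Prop :=
  ∀ c : K.ConnectedComponent, Even (threeCount H c)

/-- A component of `K` is a `3`-odd loop if it carries an odd number of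
`3`-vertices of `H`. -/
def Is3OddLoop (H : SimpleGraph V) {K : SimpleGraph V} (c : K.ConnectedComponent) : Prop :=
  Odd (threeCount H c)

/-- The number of odd components (odd cycles, for a `2`-factor) of `F`. -/
noncomputable def oddCompCount (F : SimpleGraph V) : ℕ :=
  {c : F.ConnectedComponent | Odd c.supp.ncard}.ncard

/-- The number of even components (even cycles, for a `2`-factor) of `F`. -/
noncomputable def evenCompCount (F : SimpleGraph V) : ℕ :=
  {c : F.ConnectedComponent | Even c.supp.ncard}.ncard

/-- The oddness of `G`: the minimum number of odd cycles in a `2`-factor of `G`. -/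
noncomputable def oddness (G : SimpleGraph V) : ℕ :=
  sInf {n : ℕ | ∃ F : SimpleGraph V, IsTwoFactor G F ∧ oddCompCount F = n}

/-- `v` lies on an odd component (odd cycle) of `F`. -/
def OnOddCycle (F : SimpleGraph V) (v : V) : Prop :=
  Odd ((F.connectedComponentMk v).supp.ncard)

/-- A simple `F`-matching: an `F`-matching such that on each of its paths the
only edges lying on odd cycles of `F` are the edges incident to the
end-vertices. -/
def IsSimpleFMatching (H F : SimpleGraph V) (Ps : Set (FPathIn H F)) : Prop :=
  IsFMatching H F Ps ∧
  ∀ P ∈ Ps, ∀ e ∈ P.walk.edges,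
    (e ∈ F.edgeSet ∧ ∀ w ∈ e, OnOddCycle F w) → (P.a ∈ e ∨ P.b ∈ e)

/-- The set `C ⊆ V` carries a `Θ`-graph structure in `H`: two distinct vertices
joined by three internally disjoint paths whose union is exactly the part of
`H` on `C`. -/
def IsThetaOn (H : SimpleGraph V) (C : Set V) : Prop :=
  ∃ a b : V, a ≠ b ∧ ∃ p q r : H.Walk a b,
    p.IsPath ∧ q.IsPath ∧ r.IsPath ∧ p ≠ q ∧ p ≠ r ∧ q ≠ r ∧
    (∀ w ∈ p.support, w ∈ q.support → w = a ∨ w = b) ∧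
    (∀ w ∈ p.support, w ∈ r.support → w = a ∨ w = b) ∧
    (∀ w ∈ q.support, w ∈ r.support → w = a ∨ w = b) ∧
    C = {w | w ∈ p.support ∨ w ∈ q.support ∨ w ∈ r.support} ∧
    (∀ e ∈ H.edgeSet, (∀ w ∈ e, w ∈ C) → e ∈ p.edges ∨ e ∈ q.edges ∨ e ∈ r.edges)

/-- The set `C ⊆ V` carries a kayak-paddle graph structure in `H`: two
vertex-disjoint cycles joined by a path, their union being exactly the part of
`H` on `C`. -/
def IsKayakPaddleOn (H : SimpleGraph V) (C : Set V) : Prop :=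
  ∃ a b : V, ∃ (c₁ : H.Walk a a) (c₂ : H.Walk b b) (p : H.Walk a b),
    c₁.IsCycle ∧ c₂.IsCycle ∧ p.IsPath ∧
    (∀ w ∈ c₁.support, w ∉ c₂.support) ∧
    (∀ w ∈ p.support, w ∈ c₁.support → w = a) ∧
    (∀ w ∈ p.support, w ∈ c₂.support → w = b) ∧
    C = {w | w ∈ c₁.support ∨ w ∈ c₂.support ∨ w ∈ p.support} ∧
    (∀ e ∈ H.edgeSet, (∀ w ∈ e, w ∈ C) → e ∈ c₁.edges ∨ e ∈ c₂.edges ∨ e ∈ p.edges)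

/-- The set `C ⊆ V` carries an even cycle of `H` whose vertices and edges are
exactly the part of `H` on `C`. -/
def IsEvenCycleOn (H : SimpleGraph V) (C : Set V) : Prop :=
  ∃ a : V, ∃ W : H.Walk a a, W.IsCycle ∧ Even W.length ∧
    C = {w | w ∈ W.support} ∧
    (∀ e ∈ H.edgeSet, (∀ w ∈ e, w ∈ C) → e ∈ W.edges)

/-- `Meven` is a perfect matching of the even part `F_even` of the `2`-factor
`F`: a matching of `F` using only edges on even cycles and covering all
vertices of even cycles. -/
def IsPerfectMatchingOfEvenPart (Meven : Set (Sym2 V)) (F : SimpleGraph V) : Prop :=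
  IsMatchingIn Meven F ∧
  (∀ e ∈ Meven, ∀ w ∈ e, ¬ OnOddCycle F w) ∧
  (∀ v : V, ¬ OnOddCycle F v → ∃ e ∈ Meven, v ∈ e)

/-- Two odd components `c₁`, `c₂` of `F` are linked in `H_odd = G − M_even`:
there is a path of `H_odd` from `c₁` to `c₂` all of whose interior vertices
avoid odd cycles of `F` (i.e. are `2`-vertices of `H_odd`). -/
def OddCompLinked (G F : SimpleGraph V) (Meven : Set (Sym2 V))
    (c₁ c₂ : F.ConnectedComponent) : Prop :=
  ∃ u v : V, u ∈ c₁.supp ∧ v ∈ c₂.supp ∧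
    ∃ W : (G.deleteEdges Meven).Walk u v, W.IsPath ∧ 0 < W.length ∧
      ∀ w ∈ W.support, w ≠ u → w ≠ v → ¬ OnOddCycle F w

/-- The odd-cycle-incidence graph `K_odd`: vertices are the odd cycles of `F`,
two of them being adjacent iff they are linked by a path of
`H_odd = G − M_even` with all interior vertices `2`-vertices of `H_odd`
(this is `H_odd` with the edges of `F_odd` contracted and the `2`-vertices
suppressed). -/
def Kodd (G F : SimpleGraph V) (Meven : Set (Sym2 V)) :
    SimpleGraph {c : F.ConnectedComponent // Odd c.supp.ncard} where
  Adj c₁ c₂ := c₁ ≠ c₂ ∧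
    (OddCompLinked G F Meven c₁.1 c₂.1 ∨ OddCompLinked G F Meven c₂.1 c₁.1)
  symm := ⟨fun c₁ c₂ h => ⟨h.1.symm, h.2.symm⟩⟩
  loopless := ⟨fun c h => h.1 rfl⟩

/-- The set of edges of `K` lying on the connected component `c` of `K`. -/
def compEdgeSet (K : SimpleGraph V) (c : K.ConnectedComponent) : Set (Sym2 V) :=
  {e ∈ K.edgeSet | ∃ w, w ∈ e ∧ w ∈ c.supp}

/-- The set `E_Ps` of end-edges of the paths of an `F`-matching `Ps`. -/
def endEdges {H F : SimpleGraph V} (Ps : Set (FPathIn H F)) : Set (Sym2 V) :=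
  {e | ∃ P ∈ Ps, e ∈ P.walk.edges ∧ (P.a ∈ e ∨ P.b ∈ e)}

/-- The edge set attached to a vertex of the loop-cycle-incidence graph `B`:
a component of `F − E_Ps`, a loop of the `F`-complement `ℒ`, or a path of `Ps`. -/
def bEdgeSet (F : SimpleGraph V) {H : SimpleGraph V} (Ps : Set (FPathIn H F)) :
    (F.deleteEdges (endEdges Ps)).ConnectedComponent ⊕
      ((FComplement Ps).ConnectedComponent ⊕ ↥Ps) → Set (Sym2 V)
  | Sum.inl C => compEdgeSet (F.deleteEdges (endEdges Ps)) C
  | Sum.inr (Sum.inl c) => compEdgeSet (FComplement Ps) c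
  | Sum.inr (Sum.inr P) => FPathIn.edgeSet P.1

/-- The loop-cycle-incidence graph `B`: a bipartite graph on
`𝒞* ⊕ (ℒ ⊕ Ps)`, where `𝒞*` is the set of components of `F − E_Ps`, `ℒ` the
set of components (loops) of the `F`-complement and `Ps` the paths of the
`F`-matching; a component of `F − E_Ps` is adjacent to a loop/path iff they
share an edge of `G`. -/
def LoopCycleIncidence (F : SimpleGraph V) {H : SimpleGraph V}
    (Ps : Set (FPathIn H F)) :
    SimpleGraph ((F.deleteEdges (endEdges Ps)).ConnectedComponent ⊕
      ((FComplement Ps).ConnectedComponent ⊕ ↥Ps)) where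
  Adj a b := ((a.isLeft ∧ b.isRight) ∨ (a.isRight ∧ b.isLeft)) ∧
    ∃ e, e ∈ bEdgeSet F Ps a ∧ e ∈ bEdgeSet F Ps b
  symm := by
    constructor
    rintro a b ⟨hs, e, h₁, h₂⟩
    exact ⟨by tauto, e, h₂, h₁⟩
  loopless := by
    constructor
    rintro a ⟨hs, -⟩
    rcases a with a | a <;> simp_all

/-- Remove a set of vertices from a graph (keeping them as isolated vertices):
used to form `B − Ps`. -/
def removeVerts {W : Type*} (B : SimpleGraph W) (S : Set W) : SimpleGraph W where
  Adj a b := B.Adj a b ∧ a ∉ S ∧ b ∉ S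
  symm := ⟨fun a b h => ⟨h.1.symm, h.2.2, h.2.1⟩⟩
  loopless := ⟨fun a h => B.ne_of_adj h.1 rfl⟩

/-- The vertices of `B` corresponding to the paths of `Ps`. -/
def PVerts (F : SimpleGraph V) {H : SimpleGraph V} (Ps : Set (FPathIn H F)) :
    Set ((F.deleteEdges (endEdges Ps)).ConnectedComponent ⊕
      ((FComplement Ps).ConnectedComponent ⊕ ↥Ps)) :=
  {x | ∃ P : ↥Ps, x = Sum.inr (Sum.inr P)}

/-- A permutation snark: a snark having a `2`-factor consisting of precisely
two chordless cycles. -/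
def IsPermutationSnark (G : SimpleGraph V) : Prop :=
  IsSnark G ∧ ∃ F : SimpleGraph V, IsTwoFactor G F ∧
    Nat.card F.ConnectedComponent = 2 ∧
    ∀ u v : V, G.Adj u v → ¬ F.Adj u v →
      F.connectedComponentMk u ≠ F.connectedComponentMk v

/-- The graph obtained from `H` (all of whose vertices have degree `2` or `3`)
by suppressing the degree-`2` vertices is `3`-edge-colorable: there is a
`3`-coloring of the edges which is constant through `2`-vertices and proper at
`3`-vertices. -/
def SuppressedThreeEdgeColorable (H : SimpleGraph V) : Prop :=
  ∃ c : Sym2 V → Fin 3,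
    (∀ v : V, IsThreeVertex H v →
      ∀ e₁ ∈ H.incidenceSet v, ∀ e₂ ∈ H.incidenceSet v, e₁ ≠ e₂ → c e₁ ≠ c e₂) ∧
    (∀ v : V, IsTwoVertex H v →
      ∀ e₁ ∈ H.incidenceSet v, ∀ e₂ ∈ H.incidenceSet v, c e₁ = c e₂)

/-- `e_r(G)`: the minimum cardinality of a set of pairwise non-adjacent edges
of `G` whose removal, followed by suppression of the resulting `2`-vertices,
yields a `3`-edge-colorable (cubic) graph. -/
noncomputable def edgeReductionNumber (G : SimpleGraph V) : ℕ :=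
  sInf {n : ℕ | ∃ R : Set (Sym2 V), IsMatchingIn R G ∧
    SuppressedThreeEdgeColorable (G.deleteEdges R) ∧ R.ncard = n}

section Helpers14

open Finset

private def phi2 (a : ZMod 4 × ZMod 2) : ZMod 2 := a.2 + (if a.1 = 3 then 1 else 0)

private def oddx (a : ZMod 4 × ZMod 2) : Prop := a.1 = 1 ∨ a.1 = 3

private instance : DecidablePred oddx := fun a =>
  inferInstanceAs (Decidable (a.1 = 1 ∨ a.1 = 3))

set_option synthInstance.maxSize 2000 in
set_option maxHeartbeats 1000000 in
private lemma keyfact14 : ∀ a b c : ZMod 4 × ZMod 2, a ≠ 0 → b ≠ 0 → c ≠ 0 →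
    a ≠ b → a ≠ c → b ≠ c → a + b + c = 0 →
    ((if oddx a then phi2 a else 0) + (if oddx b then phi2 b else 0) +
      (if oddx c then phi2 c else 0)
      = if a.1 ≠ 0 ∧ b.1 ≠ 0 ∧ c.1 ≠ 0 then 1 else 0) := by decide

private lemma zmod4fact : ∀ x : ZMod 4, (¬ x = 0 ∧ ¬ x = 2) ↔ (x = 1 ∨ x = 3) := by decide

private lemma vertex_struct {V : Type*} (G : SimpleGraph V)
    (hc : IsCubic G) (σ : Sym2 V → ZMod 4 × ZMod 2)
    (hσ : IsProperAbelianColoring G σ) (v : V) :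
    ∃ u₁ u₂ u₃ : V, u₁ ≠ u₂ ∧ u₁ ≠ u₃ ∧ u₂ ≠ u₃ ∧
      G.neighborSet v = {u₁, u₂, u₃} ∧
      σ s(v, u₁) ≠ 0 ∧ σ s(v, u₂) ≠ 0 ∧ σ s(v, u₃) ≠ 0 ∧
      σ s(v, u₁) ≠ σ s(v, u₂) ∧ σ s(v, u₁) ≠ σ s(v, u₃) ∧ σ s(v, u₂) ≠ σ s(v, u₃) ∧
      σ s(v, u₁) + σ s(v, u₂) + σ s(v, u₃) = 0 := by
  classical
  obtain ⟨u₁, u₂, u₃, h12, h13, h23, hset⟩ := Set.ncard_eq_three.mp (hc v)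
  have hadj : ∀ u, u ∈ ({u₁, u₂, u₃} : Set V) → G.Adj v u := fun u hu => by
    rw [← hset] at hu; exact hu
  have h1 : G.Adj v u₁ := hadj u₁ (by simp)
  have h2 : G.Adj v u₂ := hadj u₂ (by simp)
  have h3 : G.Adj v u₃ := hadj u₃ (by simp)
  have hne : ∀ a b : V, a ≠ b → G.Adj v a → G.Adj v b → σ s(v, a) ≠ σ s(v, b) := by
    intro a b hab ha hb
    refine hσ.2.1 _ (G.mem_edgeSet.mpr ha) _ (G.mem_edgeSet.mpr hb)
      ⟨fun h => hab (Sym2.congr_right.mp h), v, Sym2.mem_mk_left v a, Sym2.mem_mk_left v b⟩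
  have hinc : G.incidenceSet v = ↑({s(v, u₁), s(v, u₂), s(v, u₃)} : Finset (Sym2 V)) := by
    ext e
    simp only [Finset.coe_insert, Finset.coe_singleton, Set.mem_insert_iff,
      Set.mem_singleton_iff]
    constructor
    · rintro ⟨he, hv⟩
      have hsp := Sym2.other_spec hv
      have hadj' : G.Adj v (Sym2.Mem.other hv) := by
        rw [← SimpleGraph.mem_edgeSet, hsp]; exact he
      have hm : Sym2.Mem.other hv ∈ ({u₁, u₂, u₃} : Set V) := by rw [← hset]; exact hadj'
      rcases hm with h | h | h
      · exact Or.inl (by rw [← hsp, h])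
      · exact Or.inr (Or.inl (by rw [← hsp, h]))
      · exact Or.inr (Or.inr (by rw [← hsp, h]))
    · rintro (rfl | rfl | rfl)
      · exact ⟨G.mem_edgeSet.mpr h1, Sym2.mem_mk_left v u₁⟩
      · exact ⟨G.mem_edgeSet.mpr h2, Sym2.mem_mk_left v u₂⟩
      · exact ⟨G.mem_edgeSet.mpr h3, Sym2.mem_mk_left v u₃⟩
  have hsum := hσ.2.2 v
  rw [hinc, finsum_mem_coe_finset] at hsum
  have hd12 : s(v, u₁) ≠ s(v, u₂) := fun h => h12 (Sym2.congr_right.mp h)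
  have hd13 : s(v, u₁) ≠ s(v, u₃) := fun h => h13 (Sym2.congr_right.mp h)
  have hd23 : s(v, u₂) ≠ s(v, u₃) := fun h => h23 (Sym2.congr_right.mp h)
  rw [Finset.sum_insert (by simp [hd12, hd13]), Finset.sum_pair hd23] at hsum
  exact ⟨u₁, u₂, u₃, h12, h13, h23, hset,
    hσ.1 _ (G.mem_edgeSet.mpr h1), hσ.1 _ (G.mem_edgeSet.mpr h2),
    hσ.1 _ (G.mem_edgeSet.mpr h3),
    hne _ _ h12 h1 h2, hne _ _ h13 h1 h3, hne _ _ h23 h2 h3,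
    by rw [add_assoc]; exact hsum⟩

end Helpers14

open Classical in
private lemma delta_eq {V : Type*} [Fintype V] (G : SimpleGraph V)
    (hc : IsCubic G) (σ : Sym2 V → ZMod 4 × ZMod 2)
    (hσ : IsProperAbelianColoring G σ)
    (K : SimpleGraph V)
    (hK : ∀ u w : V, K.Adj u w ↔ (G.Adj u w ∧ oddx (σ s(u, w))))
    (v : V) :
    ∑ u : V, (if K.Adj v u then phi2 (σ s(v, u)) else 0)
      = if IsThreeVertex (G.deleteEdges {e ∈ G.edgeSet | (σ e).1 = 0}) v then 1 else 0 := by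
  obtain ⟨u₁, u₂, u₃, h12, h13, h23, hset, hn1, hn2, hn3, hab, hac, hbc, hsum⟩ :=
    vertex_struct G hc σ hσ v
  have hGv : ∀ u, G.Adj v u ↔ u ∈ ({u₁, u₂, u₃} : Finset V) := by
    intro u
    have h0 : G.Adj v u ↔ u ∈ G.neighborSet v := Iff.rfl
    rw [h0, hset]; simp
  have hmem : ∀ u, u ∈ (G.deleteEdges {e ∈ G.edgeSet | (σ e).1 = 0}).neighborSet v
      ↔ (G.Adj v u ∧ (σ s(v, u)).1 ≠ 0) := by
    intro u
    simp only [SimpleGraph.mem_neighborSet, SimpleGraph.deleteEdges_adj,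
      Set.mem_sep_iff, SimpleGraph.mem_edgeSet, not_and]
    constructor
    · rintro ⟨ha, hn⟩; exact ⟨ha, hn ha⟩
    · rintro ⟨ha, hn⟩; exact ⟨ha, fun _ => hn⟩
  have hiff : IsThreeVertex (G.deleteEdges {e ∈ G.edgeSet | (σ e).1 = 0}) v
      ↔ ((σ s(v, u₁)).1 ≠ 0 ∧ (σ s(v, u₂)).1 ≠ 0 ∧ (σ s(v, u₃)).1 ≠ 0) := by
    constructor
    · intro h3
      have hsub : (G.deleteEdges {e ∈ G.edgeSet | (σ e).1 = 0}).neighborSet v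
          ⊆ G.neighborSet v := fun u hu => (hmem u).mp hu |>.1
      have heq := Set.eq_of_subset_of_ncard_le hsub
        (by rw [hc v, h3]) (Set.toFinite _)
      have hget : ∀ u, u ∈ ({u₁, u₂, u₃} : Set V) → (σ s(v, u)).1 ≠ 0 := by
        intro u hu
        have : u ∈ G.neighborSet v := by rw [hset]; exact hu
        rw [← heq] at this
        exact ((hmem u).mp this).2
      exact ⟨hget u₁ (by simp), hget u₂ (by simp), hget u₃ (by simp)⟩
    · rintro ⟨k1, k2, k3⟩
      have heq : (G.deleteEdges {e ∈ G.edgeSet | (σ e).1 = 0}).neighborSet v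
          = G.neighborSet v := by
        ext u
        rw [hmem u]
        constructor
        · exact fun h => h.1
        · intro h
          refine ⟨h, ?_⟩
          have : u ∈ ({u₁, u₂, u₃} : Set V) := by rw [← hset]; exact h
          rcases this with rfl | rfl | rfl
          · exact k1
          · exact k2
          · exact k3
      show _ = 3
      rw [heq]; exact hc v
  have step1 : ∑ u : V, (if K.Adj v u then phi2 (σ s(v, u)) else 0)
      = ∑ u : V, (if u ∈ ({u₁, u₂, u₃} : Finset V) then
          (if oddx (σ s(v, u)) then phi2 (σ s(v, u)) else 0) else 0) := by
    refine Finset.sum_congr rfl fun u _ => ?_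
    by_cases h1 : u ∈ ({u₁, u₂, u₃} : Finset V) <;>
      by_cases h2 : oddx (σ s(v, u)) <;>
        simp [hK v u, hGv u, h1, h2]
  rw [step1, Finset.sum_ite_mem, Finset.univ_inter,
    Finset.sum_insert (by simp [h12, h13]), Finset.sum_pair h23,
    ← add_assoc,
    keyfact14 _ _ _ hn1 hn2 hn3 hab hac hbc hsum]
  exact if_congr hiff.symm rfl rfl

open Classical in
private lemma comp_sum_eq_zero {V : Type*} [Fintype V] (K : SimpleGraph V)
    (f : Sym2 V → ZMod 2) (c : K.ConnectedComponent) :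
    ∑ v : V, (if v ∈ c.supp then
      (∑ u : V, (if K.Adj v u then f s(v, u) else 0)) else 0) = 0 := by
  have h1 : ∀ v : V, (if v ∈ c.supp then
        (∑ u : V, (if K.Adj v u then f s(v, u) else 0)) else 0)
      = ∑ u : V, (if (v ∈ c.supp ∧ K.Adj v u) then f s(v, u) else 0) := by
    intro v; by_cases h : v ∈ c.supp <;> simp [h]
  rw [Finset.sum_congr rfl fun v _ => h1 v, ← Fintype.sum_prod_type']
  have hswap : ∀ p : V × V, (p.1 ∈ c.supp ∧ K.Adj p.1 p.2) ↔
      (p.2 ∈ c.supp ∧ K.Adj p.2 p.1) := by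
    rintro ⟨a, b⟩
    constructor
    · rintro ⟨hs, ha⟩
      refine ⟨?_, ha.symm⟩
      rw [SimpleGraph.ConnectedComponent.mem_supp_iff] at hs ⊢
      rw [← hs]
      exact SimpleGraph.ConnectedComponent.sound ha.symm.reachable
    · rintro ⟨hs, ha⟩
      refine ⟨?_, ha.symm⟩
      rw [SimpleGraph.ConnectedComponent.mem_supp_iff] at hs ⊢
      rw [← hs]
      exact SimpleGraph.ConnectedComponent.sound ha.symm.reachable
  refine Finset.sum_ninvolution Prod.swap ?_ ?_ (fun _ => Finset.mem_univ _) ?_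
  · intro p
    by_cases h : p.1 ∈ c.supp ∧ K.Adj p.1 p.2
    · have h2 : p.swap.1 ∈ c.supp ∧ K.Adj p.swap.1 p.swap.2 := by
        simpa [Prod.swap] using (hswap p).mp h
      have hs : s(p.swap.1, p.swap.2) = s(p.1, p.2) := by
        simp [Prod.swap, Sym2.eq_swap]
      rw [if_pos h, if_pos h2, hs]
      have hxx : ∀ x : ZMod 2, x + x = 0 := by decide
      exact hxx _
    · have h2 : ¬ (p.swap.1 ∈ c.supp ∧ K.Adj p.swap.1 p.swap.2) := fun hh =>
        h ((hswap p).mpr hh)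
      rw [if_neg h, if_neg h2, add_zero]
  · intro p hp
    have h : p.1 ∈ c.supp ∧ K.Adj p.1 p.2 := by
      by_contra h; rw [if_neg h] at hp; exact hp rfl
    intro heq
    have hq : p.2 = p.1 := congrArg Prod.fst heq
    exact h.2.ne hq.symm
  · intro p; exact Prod.swap_swap p


-- STATEMENT 14
theorem statement14 {V : Type*} [Fintype V] (G : SimpleGraph V) (hG : IsSnark G)
    (σ : Sym2 V → ZMod 4 × ZMod 2) (hσ : IsProperAbelianColoring G σ)
    (Ps : Set (FPathIn (G.deleteEdges {e ∈ G.edgeSet | (σ e).1 = 0})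
        (G.deleteEdges {e ∈ G.edgeSet | (σ e).2 = 0})))
    (hPs : IsFMatching (G.deleteEdges {e ∈ G.edgeSet | (σ e).1 = 0})
        (G.deleteEdges {e ∈ G.edgeSet | (σ e).2 = 0}) Ps)
    (hX2 : FMatchingEdges Ps = {e ∈ G.edgeSet | (σ e).1 = 2}) :
    IsThreeEvenComplement (G.deleteEdges {e ∈ G.edgeSet | (σ e).1 = 0})
      (FComplement Ps) := by
  classical
  intro c
  have hc : IsCubic G := hG.2.2.1
  have hK : ∀ u w : V, (FComplement Ps).Adj u w ↔ (G.Adj u w ∧ oddx (σ s(u, w))) := by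
    intro u w
    simp only [FComplement, SimpleGraph.deleteEdges_adj, hX2, Set.mem_sep_iff,
      SimpleGraph.mem_edgeSet, not_and]
    constructor
    · rintro ⟨⟨ha, h0⟩, h2⟩
      exact ⟨ha, (zmod4fact _).mp ⟨h0 ha, h2 ha⟩⟩
    · rintro ⟨ha, hodd⟩
      have hz := (zmod4fact _).mpr hodd
      exact ⟨⟨ha, fun _ => hz.1⟩, fun _ => hz.2⟩
  have hδ := delta_eq G hc σ hσ (FComplement Ps) hK
  have hzero : (∑ v : V, (if (v ∈ c.supp ∧
      IsThreeVertex (G.deleteEdges {e ∈ G.edgeSet | (σ e).1 = 0}) v)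
        then (1 : ZMod 2) else 0)) = 0 := by
    have hcz := comp_sum_eq_zero (FComplement Ps) (fun e => phi2 (σ e)) c
    refine Eq.trans (Finset.sum_congr rfl fun v _ => ?_) hcz
    by_cases h1 : v ∈ c.supp
    · simp only [h1, if_true, true_and]
      exact (hδ v).symm
    · simp [h1]
  have hcard : ((threeCount (G.deleteEdges {e ∈ G.edgeSet | (σ e).1 = 0}) c : ℕ) : ZMod 2)
      = 0 := by
    have hset : {v ∈ c.supp |
          IsThreeVertex (G.deleteEdges {e ∈ G.edgeSet | (σ e).1 = 0}) v}
        = ↑(Finset.univ.filter (fun v => v ∈ c.supp ∧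
            IsThreeVertex (G.deleteEdges {e ∈ G.edgeSet | (σ e).1 = 0}) v)) := by
      ext v; simp
    simp only [threeCount]
    rw [hset, Set.ncard_coe_finset, ← Finset.sum_boole]
    exact hzero
  have hdvd : (2 : ℕ) ∣ threeCount (G.deleteEdges {e ∈ G.edgeSet | (σ e).1 = 0}) c :=
    (ZMod.natCast_eq_zero_iff _ 2).mp hcard
  obtain ⟨k, hk⟩ := hdvd
  exact ⟨k, by omega⟩
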